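/- Let Q ∈ ℝ^{M×np} be partitioned into column blocks Q = [Q₁,…,Q_p] with each Q_j ∈ ℝ^{M×n}, and define s^* = inf{‖z‖_{b1}/‖z‖_{b∞} : z ≠ 0, Qz = 0} (s^* = +∞ if ker Q = {0}). For each i, let t_i = inf over matrices P_i ∈ ℝ^{M×n} of max_{1≤j≤p} ‖δ_{ij} I_n − P_iᵀ Q_j‖₂ (spectral norm), where δ_{ij} = 1 if i = j and 0 otherwise, and set t = max_{1≤i≤p} t_i. Then s_* := 1/t is a lower bound on s^*: every nonzero z with Qz = 0 satisfies ‖z‖_{b∞} ≤ t · ‖z‖_{b1}, hence s_* ≤ s^*. -/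
import Mathlib


open MeasureTheory ProbabilityTheory Finset Matrix

/-- Euclidean norm of a finitely-indexed real vector. -/
noncomputable def vnorm {ι : Type*} [Fintype ι] (v : ι → ℝ) : ℝ :=
  Real.sqrt (∑ i, (v i) ^ 2)

/-- Euclidean norm of the `i`-th block of `x ∈ ℝ^{np}` (blocks indexed by `Fin p`). -/
noncomputable def bnorm {n p : ℕ} (x : Fin p × Fin n → ℝ) (i : Fin p) : ℝ :=
  vnorm (fun j => x (i, j))

/-- Block-ℓ1 norm: `‖x‖_{b1} = ∑ i, ‖x_i‖₂`. -/
noncomputable def bl1 {n p : ℕ} (x : Fin p × Fin n → ℝ) : ℝ :=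
  ∑ i, bnorm x i

/-- Block-ℓ∞ norm: `‖x‖_{b∞} = max_i ‖x_i‖₂`. -/
noncomputable def blinf {n p : ℕ} (x : Fin p × Fin n → ℝ) : ℝ :=
  ⨆ i, bnorm x i

open scoped Classical in
/-- Block support: indices of nonzero blocks. -/
noncomputable def bsupp {n p : ℕ} (x : Fin p × Fin n → ℝ) : Finset (Fin p) :=
  Finset.univ.filter (fun i => ∃ j, x (i, j) ≠ 0)

/-- `ω₂(A,s) = inf { ‖Az‖₂ / ‖z‖_{b∞} : z ≠ 0, ‖z‖_{b1} ≤ s ‖z‖_{b∞} }`. -/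
noncomputable def omega2 {m n p : ℕ} (A : Matrix (Fin m) (Fin p × Fin n) ℝ) (s : ℝ) : ℝ :=
  sInf {r | ∃ z : Fin p × Fin n → ℝ, z ≠ 0 ∧ bl1 z ≤ s * blinf z ∧
    r = vnorm (A.mulVec z) / blinf z}

/-- `ω_{b∞}(AᵀA,s) = inf { ‖AᵀAz‖_{b∞} / ‖z‖_{b∞} : z ≠ 0, ‖z‖_{b1} ≤ s ‖z‖_{b∞} }`. -/
noncomputable def omegaBInf {m n p : ℕ} (A : Matrix (Fin m) (Fin p × Fin n) ℝ) (s : ℝ) : ℝ :=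
  sInf {r | ∃ z : Fin p × Fin n → ℝ, z ≠ 0 ∧ bl1 z ≤ s * blinf z ∧
    r = blinf ((Aᵀ * A).mulVec z) / blinf z}

/-- Block ℓ1-constrained minimal singular value
`ρ_s(A) = inf { ‖Az‖₂ / ‖z‖₂ : z ≠ 0, ‖z‖_{b1}² ≤ s ‖z‖₂² }`. -/
noncomputable def rhoCMSV {m n p : ℕ} (A : Matrix (Fin m) (Fin p × Fin n) ℝ) (s : ℝ) : ℝ :=
  sInf {r | ∃ z : Fin p × Fin n → ℝ, z ≠ 0 ∧ (bl1 z) ^ 2 ≤ s * (vnorm z) ^ 2 ∧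
    r = vnorm (A.mulVec z) / vnorm z}

/-- Spectral norm (largest singular value) of a real matrix, as the ℓ2→ℓ2 operator norm. -/
noncomputable def specNorm {ι κ : Type*} [Fintype ι] [Fintype κ] (M : Matrix ι κ ℝ) : ℝ :=
  sSup {r | ∃ v : κ → ℝ, vnorm v ≤ 1 ∧ r = vnorm (M.mulVec v)}

/-- The `j`-th column block (of `n` columns) of a matrix with `np` columns. -/
def colBlock {ι : Type*} {n p : ℕ} (Q : Matrix ι (Fin p × Fin n) ℝ) (j : Fin p) :
    Matrix ι (Fin n) ℝ := Matrix.of fun r c => Q r (j, c)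

/-- The `l`-th row block (of `n` rows) of a matrix with `np` rows. -/
def rowBlock {κ : Type*} {n p : ℕ} (P : Matrix (Fin p × Fin n) κ ℝ) (l : Fin p) :
    Matrix (Fin n) κ ℝ := Matrix.of fun r c => P (l, r) c

/-- `δ_{ij} Iₙ`. -/
def deltaId (n : ℕ) {p : ℕ} (i j : Fin p) : Matrix (Fin n) (Fin n) ℝ :=
  if i = j then 1 else 0

/-- Orlicz ψ₂ norm of a scalar random variable. -/
noncomputable def psi2 {Ω : Type*} [MeasurableSpace Ω] (μ : Measure Ω) (Y : Ω → ℝ) : ℝ :=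
  sInf {t | 0 < t ∧ ∫ ω, Real.exp ((Y ω) ^ 2 / t ^ 2) ∂μ ≤ 2}

section aux
variable {ι : Type*} [Fintype ι]

lemma vnorm_eq_norm (v : ι → ℝ) :
    vnorm v = ‖(WithLp.linearEquiv 2 ℝ (ι → ℝ)).symm v‖ := by
  have h := EuclideanSpace.norm_eq (𝕜 := ℝ) (n := ι) ((WithLp.linearEquiv 2 ℝ (ι → ℝ)).symm v)
  rw [h]
  unfold vnorm
  congr 1
  refine Finset.sum_congr rfl fun i _ => ?_
  rw [Real.norm_eq_abs, sq_abs]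
  rfl

lemma vnorm_nonneg (v : ι → ℝ) : 0 ≤ vnorm v := Real.sqrt_nonneg _

lemma vnorm_zero : vnorm (0 : ι → ℝ) = 0 := by simp [vnorm]

lemma vnorm_pos {v : ι → ℝ} (hv : v ≠ 0) : 0 < vnorm v := by
  rw [vnorm_eq_norm]
  simpa using hv

lemma vnorm_smul (c : ℝ) (v : ι → ℝ) : vnorm (c • v) = |c| * vnorm v := by
  rw [vnorm_eq_norm, vnorm_eq_norm, (WithLp.linearEquiv 2 ℝ (ι → ℝ)).symm.map_smul, norm_smul, Real.norm_eq_abs]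

lemma vnorm_sum {κ : Type*} (s : Finset κ) (f : κ → ι → ℝ) :
    vnorm (∑ j ∈ s, f j) ≤ ∑ j ∈ s, vnorm (f j) := by
  rw [vnorm_eq_norm, map_sum]
  refine (norm_sum_le _ _).trans_eq ?_
  exact Finset.sum_congr rfl fun j _ => (vnorm_eq_norm (f j)).symm

lemma specNorm_set_nonempty {κ : Type*} [Fintype κ] (A : Matrix ι κ ℝ) :
    {r | ∃ v : κ → ℝ, vnorm v ≤ 1 ∧ r = vnorm (A.mulVec v)}.Nonempty := by
  exact ⟨vnorm (A.mulVec 0), 0, by simp [vnorm_zero], rfl⟩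

lemma specNorm_set_bddAbove {κ : Type*} [Fintype κ] (A : Matrix ι κ ℝ) :
    BddAbove {r | ∃ v : κ → ℝ, vnorm v ≤ 1 ∧ r = vnorm (A.mulVec v)} := by
  refine ⟨Real.sqrt (∑ i, ∑ k, (A i k) ^ 2), ?_⟩
  rintro r ⟨v, hv, rfl⟩
  have hv2 : ∑ k, (v k) ^ 2 ≤ 1 := by
    have hnn : (0:ℝ) ≤ ∑ k : κ, (v k)^2 := Finset.sum_nonneg fun k _ => sq_nonneg _
    have h1 : Real.sqrt (∑ k : κ, (v k)^2) ≤ 1 := hv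
    nlinarith [Real.sq_sqrt hnn, Real.sqrt_nonneg (∑ k : κ, (v k)^2)]
  refine Real.sqrt_le_sqrt ?_
  refine Finset.sum_le_sum fun i _ => ?_
  calc (A.mulVec v i) ^ 2 = (∑ k, A i k * v k) ^ 2 := by rfl
    _ ≤ (∑ k, (A i k)^2) * (∑ k, (v k)^2) := Finset.sum_mul_sq_le_sq_mul_sq _ _ _
    _ ≤ (∑ k, (A i k)^2) * 1 := by
        refine mul_le_mul_of_nonneg_left hv2 (Finset.sum_nonneg fun k _ => sq_nonneg _)
    _ = ∑ k, (A i k)^2 := mul_one _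

lemma specNorm_nonneg {κ : Type*} [Fintype κ] (A : Matrix ι κ ℝ) : 0 ≤ specNorm A := by
  have : (0:ℝ) ∈ {r | ∃ v : κ → ℝ, vnorm v ≤ 1 ∧ r = vnorm (A.mulVec v)} :=
    ⟨0, by simp [vnorm_zero], by simp [Matrix.mulVec_zero, vnorm_zero]⟩
  exact le_csSup (specNorm_set_bddAbove A) this

lemma vnorm_mulVec_le {κ : Type*} [Fintype κ] (A : Matrix ι κ ℝ) (v : κ → ℝ) :
    vnorm (A.mulVec v) ≤ specNorm A * vnorm v := by
  rcases eq_or_ne v 0 with rfl | hv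
  · simp [Matrix.mulVec_zero, vnorm_zero, specNorm_nonneg]
  · have hc : 0 < vnorm v := vnorm_pos hv
    set u : κ → ℝ := (vnorm v)⁻¹ • v with hu
    have hun : vnorm u = 1 := by
      rw [hu, vnorm_smul, abs_of_pos (inv_pos.mpr hc), inv_mul_cancel₀ hc.ne']
    have hmem : vnorm (A.mulVec u) ∈
        {r | ∃ w : κ → ℝ, vnorm w ≤ 1 ∧ r = vnorm (A.mulVec w)} := ⟨u, hun.le, rfl⟩
    have hle : vnorm (A.mulVec u) ≤ specNorm A := le_csSup (specNorm_set_bddAbove A) hmem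
    have : A.mulVec u = (vnorm v)⁻¹ • A.mulVec v := by
      rw [hu, Matrix.mulVec_smul]
    rw [this, vnorm_smul, abs_of_pos (inv_pos.mpr hc)] at hle
    calc vnorm (A.mulVec v) = vnorm v * ((vnorm v)⁻¹ * vnorm (A.mulVec v)) := by
          field_simp
      _ ≤ vnorm v * specNorm A := mul_le_mul_of_nonneg_left hle hc.le
      _ = specNorm A * vnorm v := mul_comm _ _

end aux

/-- Proposition 2: with
`t = max_i inf_{P_i} max_j ‖δ_{ij} Iₙ - P_iᵀ Q_j‖₂`, every nonzero `z ∈ ker Q` satisfies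
`‖z‖_{b∞} ≤ t ‖z‖_{b1}`, hence `s_* = 1/t` is a lower bound on `s^*`:
`1/t ≤ ‖z‖_{b1}/‖z‖_{b∞}` for every nonzero `z ∈ ker Q`. -/


theorem stmt13 {M n p : ℕ} (Q : Matrix (Fin M) (Fin p × Fin n) ℝ) (t : ℝ)
    (ht : t = ⨆ i : Fin p, sInf {r | ∃ P : Matrix (Fin M) (Fin n) ℝ,
      r = ⨆ j : Fin p, specNorm (deltaId n i j - Pᵀ * colBlock Q j)}) :
    ∀ z : Fin p × Fin n → ℝ, z ≠ 0 → Q.mulVec z = 0 →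
      blinf z ≤ t * bl1 z ∧ 1 / t ≤ bl1 z / blinf z := by
  intro z hz hker
  obtain ⟨x, hx⟩ : ∃ x, z x ≠ 0 := Function.ne_iff.mp hz
  haveI : Nonempty (Fin p) := ⟨x.1⟩
  haveI : Nonempty (Fin n) := ⟨x.2⟩
  -- positivity of the block containing a nonzero entry
  have hbx : 0 < bnorm z x.1 := by
    refine vnorm_pos fun h => hx ?_
    exact congrFun h x.2
  have hbl1 : 0 < bl1 z := by
    have := Finset.single_le_sum (f := fun i => bnorm z i)
      (fun i _ => vnorm_nonneg _) (Finset.mem_univ x.1)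
    exact hbx.trans_le this
  have hblinf : 0 < blinf z := by
    have := le_ciSup (Finite.bddAbove_range fun i => bnorm z i) x.1
    exact hbx.trans_le this
  -- key inequality for a fixed block row and any P
  have key : ∀ (i : Fin p) (P : Matrix (Fin M) (Fin n) ℝ),
      bnorm z i ≤ (⨆ j : Fin p, specNorm (deltaId n i j - Pᵀ * colBlock Q j)) * bl1 z := by
    intro i P
    set B : Fin p → Matrix (Fin n) (Fin n) ℝ :=
      fun j => deltaId n i j - Pᵀ * colBlock Q j with hB
    set r : ℝ := ⨆ j : Fin p, specNorm (B j) with hr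
    have h1 : ∑ j : Fin p, (deltaId n i j).mulVec (fun l => z (j, l)) =
        (fun k => z (i, k)) := by
      rw [Finset.sum_eq_single i]
      · simp [deltaId, Matrix.one_mulVec]
      · intro j _ hj
        have : i ≠ j := Ne.symm hj
        simp [deltaId, this, Matrix.zero_mulVec]
      · simp
    have h2 : ∑ j : Fin p, (Pᵀ * colBlock Q j).mulVec (fun l => z (j, l)) = 0 := by
      funext k
      simp only [Finset.sum_apply, Matrix.mulVec, dotProduct, Matrix.mul_apply,
        Matrix.transpose_apply, colBlock, Matrix.of_apply, Pi.zero_apply]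
      have hsplit : ∀ g : Fin p × Fin n → ℝ,
          ∑ y : Fin p × Fin n, g y = ∑ j : Fin p, ∑ l : Fin n, g (j, l) :=
        fun g => Fintype.sum_prod_type g
      rw [← hsplit (fun y => (∑ m, P m k * Q m y) * z y)]
      simp only [Finset.sum_mul]
      rw [Finset.sum_comm]
      refine Finset.sum_eq_zero fun m _ => ?_
      have hm : Q.mulVec z m = 0 := congrFun hker m
      simp only [mul_assoc, ← Finset.mul_sum]
      have : (∑ x : Fin p × Fin n, Q m x * z x) = Q.mulVec z m := rfl
      rw [this, hm, mul_zero]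
    have hdec : (fun k => z (i, k)) = ∑ j : Fin p, (B j).mulVec (fun l => z (j, l)) := by
      have hs : ∀ j : Fin p, (B j).mulVec (fun l => z (j, l)) =
          (deltaId n i j).mulVec (fun l => z (j, l)) -
            (Pᵀ * colBlock Q j).mulVec (fun l => z (j, l)) :=
        fun j => Matrix.sub_mulVec _ _ _
      calc (fun k => z (i, k))
          = (∑ j : Fin p, (deltaId n i j).mulVec (fun l => z (j, l))) -
              ∑ j : Fin p, (Pᵀ * colBlock Q j).mulVec (fun l => z (j, l)) := by
            rw [h1, h2, sub_zero]
        _ = ∑ j : Fin p, (B j).mulVec (fun l => z (j, l)) := by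
            rw [← Finset.sum_sub_distrib]
            exact Finset.sum_congr rfl fun j _ => (hs j).symm
    calc bnorm z i = vnorm (∑ j : Fin p, (B j).mulVec (fun l => z (j, l))) := by
          rw [bnorm, ← hdec]
      _ ≤ ∑ j : Fin p, vnorm ((B j).mulVec (fun l => z (j, l))) := vnorm_sum _ _
      _ ≤ ∑ j : Fin p, r * bnorm z j := by
          refine Finset.sum_le_sum fun j _ => ?_
          have h3 : vnorm ((B j).mulVec (fun l => z (j, l))) ≤
              specNorm (B j) * vnorm (fun l => z (j, l)) := vnorm_mulVec_le _ _
          have h4 : specNorm (B j) ≤ r :=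
            le_ciSup (Finite.bddAbove_range fun j => specNorm (B j)) j
          refine h3.trans ?_
          exact mul_le_mul_of_nonneg_right h4 (vnorm_nonneg _)
      _ = r * bl1 z := by rw [bl1, ← Finset.mul_sum]
  -- each block norm is bounded by t * bl1 z
  have hmain : blinf z ≤ t * bl1 z := by
    rw [blinf]
    refine ciSup_le fun i => ?_
    have hSne : Set.Nonempty {r | ∃ P : Matrix (Fin M) (Fin n) ℝ,
        r = ⨆ j : Fin p, specNorm (deltaId n i j - Pᵀ * colBlock Q j)} :=
      ⟨_, 0, rfl⟩
    have hlb : bnorm z i / bl1 z ≤ sInf {r | ∃ P : Matrix (Fin M) (Fin n) ℝ,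
        r = ⨆ j : Fin p, specNorm (deltaId n i j - Pᵀ * colBlock Q j)} := by
      refine le_csInf hSne ?_
      rintro r ⟨P, rfl⟩
      rw [div_le_iff₀ hbl1]
      exact key i P
    have hit : sInf {r | ∃ P : Matrix (Fin M) (Fin n) ℝ,
        r = ⨆ j : Fin p, specNorm (deltaId n i j - Pᵀ * colBlock Q j)} ≤ t := by
      rw [ht]
      exact le_ciSup (f := fun i : Fin p => sInf {r | ∃ P : Matrix (Fin M) (Fin n) ℝ,
        r = ⨆ j : Fin p, specNorm (deltaId n i j - Pᵀ * colBlock Q j)})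
        (Finite.bddAbove_range _) i
    have := hlb.trans hit
    rw [div_le_iff₀ hbl1] at this
    exact this
  refine ⟨hmain, ?_⟩
  have htpos : 0 < t := by nlinarith
  rw [div_le_div_iff₀ htpos hblinf, one_mul, mul_comm]
  exact hmain
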